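/- Let B be a finite Garside shadow in (W,S) with M = max{ℓ(b) : b ∈ B}, let g ∈ W and s ∈ S with ℓ(sg) > ℓ(g), and suppose π_B(g⁻¹) ≠ π_B((sg)⁻¹). Then the wall of s is M-close to sg, i.e., at most M reflections separate sg from the wall of s. -/

import Mathlib

open CoxeterSystem

variable {ι W : Type} [Group W] {cm : CoxeterMatrix ι}

/-- The right weak order on `W`: `g ⪯ h` iff `ℓ(g) + ℓ(g⁻¹h) = ℓ(h)`. -/
def WLe (cs : CoxeterSystem cm W) (g h : W) : Prop :=
  cs.length g + cs.length (g⁻¹ * h) = cs.length h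

/-- `w` is a suffix of `g` if `g = u * w` with `ℓ(g) = ℓ(u) + ℓ(w)`. -/
def IsSuffixOf (cs : CoxeterSystem cm W) (w g : W) : Prop :=
  ∃ u : W, g = u * w ∧ cs.length g = cs.length u + cs.length w

/-- `j` is the join (least upper bound) of `X` with respect to the right weak order. -/
def IsJoin (cs : CoxeterSystem cm W) (X : Set W) (j : W) : Prop :=
  (∀ x ∈ X, WLe cs x j) ∧ ∀ u : W, (∀ x ∈ X, WLe cs x u) → WLe cs j u

/-- A Garside shadow: a subset of `W` containing all simple reflections, closed under
existing joins and under taking suffixes. -/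
def IsGarsideShadow (cs : CoxeterSystem cm W) (B : Set W) : Prop :=
  (∀ i : ι, cs.simple i ∈ B) ∧
  (∀ X : Set W, X ⊆ B → ∀ j : W, IsJoin cs X j → j ∈ B) ∧
  (∀ b ∈ B, ∀ w : W, IsSuffixOf cs w b → w ∈ B)

/-- `π` is the `B`-projection: `π g` is the join of `{b ∈ B : b ⪯ g}` and lies in `B`. -/
def IsGarsideProjection (cs : CoxeterSystem cm W) (B : Set W) (π : W → W) : Prop :=
  ∀ g : W, π g ∈ B ∧ IsJoin cs {b : W | b ∈ B ∧ WLe cs b g} (π g)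

/-- The voracious projection with respect to `π = π_B`: `ν_B(g) = g · π_B(g⁻¹)`. -/
def vor (π : W → W) (g : W) : W := g * π g⁻¹

/-- The language `L_g`, defined inductively: `L_id = {ε}` and
`L_g = {uv : u ∈ L_{ν_B(g)}, v a minimal length word representing ν_B(g)⁻¹g}`. -/
inductive VorL (cs : CoxeterSystem cm W) (π : W → W) : W → List ι → Prop
  | nil : VorL cs π 1 []
  | step {g : W} {u v : List ι} (hg : g ≠ 1) (hu : VorL cs π (vor π g) u)
      (hv : cs.wordProd v = (vor π g)⁻¹ * g)
      (hmin : v.length = cs.length ((vor π g)⁻¹ * g)) :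
      VorL cs π g (u ++ v)

/-- The voracious language `V_B = ⋃_{g ∈ W} L_g`. -/
def VorLang (cs : CoxeterSystem cm W) (π : W → W) : Language ι :=
  {v : List ι | ∃ g : W, VorL cs π g v}

/-- The reflection `r` separates `g` from `h`. -/
def SepElem (cs : CoxeterSystem cm W) (r g h : W) : Prop :=
  Xor' (cs.length (r * g) < cs.length g) (cs.length (r * h) < cs.length h)

/-- The reflection `r'` separates `g` from the wall of the reflection `r`. -/
def SepWall (cs : CoxeterSystem cm W) (r' g r : W) : Prop :=
  ∀ h : W, (∃ i : ι, r * h = h * cs.simple i) → SepElem cs r' g h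

/-- The wall of the reflection `r` is `m`-close to `g`: at most `m` reflections
separate `g` from the wall of `r`. -/
def MClose (cs : CoxeterSystem cm W) (m : ℕ) (g r : W) : Prop :=
  ∃ F : Finset W, F.card ≤ m ∧
    ∀ r' : W, cs.IsReflection r' → SepWall cs r' g r → r' ∈ F


namespace GarsideAux

section Tits

open Classical

variable (cs : CoxeterSystem cm W)

/-- The Tits reflection-sign function for the simple reflection `i`. -/
noncomputable def titsFun (i : ι) : W × ℤˣ → W × ℤˣ :=
  fun p => (cs.simple i * p.1 * cs.simple i, (if p.1 = cs.simple i then -1 else 1) * p.2)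

lemma titsFun_invol (i : ι) (p : W × ℤˣ) :
    titsFun cs i (titsFun cs i p) = p := by
  obtain ⟨t, ε⟩ := p
  by_cases h : t = cs.simple i
  · subst h
    simp [titsFun, cs.simple_mul_simple_self]
  · have h2 : cs.simple i * t * cs.simple i ≠ cs.simple i := by
      intro hc
      apply h
      have := congrArg (fun z => cs.simple i * z * cs.simple i) hc
      simpa [mul_assoc, cs.simple_mul_simple_cancel_left, cs.simple_mul_simple_self] using this
    simp only [titsFun, if_neg h, if_neg h2, one_mul]
    simp [mul_assoc, cs.simple_mul_simple_cancel_left, cs.simple_mul_simple_self]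

/-- The Tits permutation for the simple reflection `i`. -/
noncomputable def titsPerm (i : ι) : Equiv.Perm (W × ℤˣ) :=
  ⟨titsFun cs i, titsFun cs i, fun p => titsFun_invol cs i p, fun p => titsFun_invol cs i p⟩

lemma titsPerm_apply (i : ι) (t : W) (ε : ℤˣ) :
    titsPerm cs i (t, ε)
      = (cs.simple i * t * cs.simple i, (if t = cs.simple i then -1 else 1) * ε) := rfl

/-- The palindrome identity. -/
lemma pal (i i' : ι) (k : ℕ) :
    (cs.simple i' * cs.simple i) ^ k * cs.simple i' * (cs.simple i' * cs.simple i) ^ k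
      = cs.simple i' := by
  induction k with
  | zero => simp
  | succ k ih =>
    set z := cs.simple i' * cs.simple i with hz
    have h1 : z ^ (k+1) * cs.simple i' * z ^ (k+1)
        = z * (z ^ k * cs.simple i' * z ^ k) * z := by
      rw [pow_succ']
      group
    rw [h1, ih, hz]
    simp [mul_assoc, cs.simple_mul_simple_cancel_left, cs.simple_mul_simple_self]




/-- Auxiliary identities for two involutions. -/
lemma invol_pal {G : Type*} [Group G] {a b : G} (ha : a * a = 1) (hb : b * b = 1) (k : ℕ) :
    (b * a) ^ k * b * (b * a) ^ k = b := by
  have hbinv : b⁻¹ = b := inv_eq_of_mul_eq_one_right hb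
  have hainv : a⁻¹ = a := inv_eq_of_mul_eq_one_right ha
  have hconj : b * (b * a) * b⁻¹ = (b * a)⁻¹ := by
    rw [hbinv, mul_inv_rev, hainv, hbinv, ← mul_assoc, hb, one_mul]
  have h2 : b * (b * a) ^ k * b⁻¹ = ((b * a) ^ k)⁻¹ := by
    have h := map_pow (MulAut.conj b) (b * a) k
    simp only [MulAut.conj_apply] at h
    rw [h, hconj, inv_pow]
  have h3 : b * (b * a) ^ k = ((b * a) ^ k)⁻¹ * b := by
    rw [← h2, mul_assoc, hbinv, hb, mul_one]
  rw [mul_assoc, h3, ← mul_assoc, mul_inv_cancel, one_mul]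

lemma invol_conj {G : Type*} [Group G] {a b : G} (ha : a * a = 1) (hb : b * b = 1) (k : ℕ) :
    (b * a) ^ k * b * ((b * a) ^ k)⁻¹ = (b * a) ^ (2 * k) * b := by
  have h1 : (b * a) ^ k * b = b * ((b * a) ^ k)⁻¹ :=
    eq_mul_inv_of_mul_eq (invol_pal ha hb k)
  calc (b * a) ^ k * b * ((b * a) ^ k)⁻¹
      = (b * a) ^ k * (b * ((b * a) ^ k)⁻¹) := by rw [mul_assoc]
    _ = (b * a) ^ k * ((b * a) ^ k * b) := by rw [← h1]
    _ = (b * a) ^ (2 * k) * b := by rw [← mul_assoc, ← pow_add, two_mul]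

lemma invol_conj2 {G : Type*} [Group G] {a b : G} (ha : a * a = 1) (hb : b * b = 1) (k : ℕ) :
    (b * a) ^ k * (b * a * b) * ((b * a) ^ k)⁻¹ = (b * a) ^ (2 * k + 1) * b := by
  have h1 : (b * a) ^ k * b = b * ((b * a) ^ k)⁻¹ :=
    eq_mul_inv_of_mul_eq (invol_pal ha hb k)
  have h2 : (b * a) ^ k * (b * a * b) * ((b * a) ^ k)⁻¹
      = (b * a) ^ (k + 1) * (b * ((b * a) ^ k)⁻¹) := by
    rw [pow_succ]
    simp only [mul_assoc]
  rw [h2, ← h1, ← mul_assoc, ← pow_add]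
  have h3 : k + 1 + k = 2 * k + 1 := by omega
  rw [h3]

lemma titsPerm_mul_pow (i i' : ι) (k : ℕ) (t : W) (ε : ℤˣ) :
    ((titsPerm cs i * titsPerm cs i') ^ k) (t, ε) =
      ((cs.simple i * cs.simple i') ^ k * t * ((cs.simple i * cs.simple i') ^ k)⁻¹,
        (∏ j ∈ Finset.range (2 * k),
          (if t = (cs.simple i' * cs.simple i) ^ j * cs.simple i' then (-1 : ℤˣ) else 1)) * ε) := by
  have ha : cs.simple i * cs.simple i = 1 := cs.simple_mul_simple_self i
  have hb : cs.simple i' * cs.simple i' = 1 := cs.simple_mul_simple_self i'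
  induction k with
  | zero => simp
  | succ k ih =>
    have hzy : ((cs.simple i * cs.simple i') ^ k)⁻¹ = (cs.simple i' * cs.simple i) ^ k := by
      rw [← inv_pow, mul_inv_rev, cs.inv_simple, cs.inv_simple]
    have hzy' : (cs.simple i * cs.simple i') ^ k = ((cs.simple i' * cs.simple i) ^ k)⁻¹ := by
      rw [← hzy, inv_inv]
    have hps : (titsPerm cs i * titsPerm cs i') ^ (k + 1)
        = (titsPerm cs i * titsPerm cs i') * (titsPerm cs i * titsPerm cs i') ^ k :=
      pow_succ' _ _
    rw [hps, Equiv.Perm.mul_apply, ih, Equiv.Perm.mul_apply, titsPerm_apply cs i',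
      titsPerm_apply cs i]
    have hc1 : ((cs.simple i * cs.simple i') ^ k * t * ((cs.simple i * cs.simple i') ^ k)⁻¹
          = cs.simple i')
        ↔ (t = (cs.simple i' * cs.simple i) ^ (2 * k) * cs.simple i') := by
      rw [hzy, hzy']
      constructor
      · intro h
        have h4 := congrArg (fun w => (cs.simple i' * cs.simple i) ^ k * w
          * ((cs.simple i' * cs.simple i) ^ k)⁻¹) h
        have h5 : (cs.simple i' * cs.simple i) ^ k * (((cs.simple i' * cs.simple i) ^ k)⁻¹ * t
            * (cs.simple i' * cs.simple i) ^ k) * ((cs.simple i' * cs.simple i) ^ k)⁻¹ = t := by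
          group
        rw [h5] at h4
        rw [h4]
        exact invol_conj ha hb k
      · intro h
        rw [h, ← invol_conj ha hb k]
        group
    have hc2 : (cs.simple i' * ((cs.simple i * cs.simple i') ^ k * t
            * ((cs.simple i * cs.simple i') ^ k)⁻¹) * cs.simple i' = cs.simple i)
        ↔ (t = (cs.simple i' * cs.simple i) ^ (2 * k + 1) * cs.simple i') := by
      have hkey : ∀ X : W, (cs.simple i' * X * cs.simple i' = cs.simple i)
          ↔ (X = cs.simple i' * cs.simple i * cs.simple i') := by
        intro X
        constructor
        · intro h
          rw [← h]
          simp [mul_assoc, cs.simple_mul_simple_cancel_left, cs.simple_mul_simple_self]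
        · intro h
          rw [h]
          simp [mul_assoc, cs.simple_mul_simple_cancel_left, cs.simple_mul_simple_self]
      rw [hkey, hzy, hzy']
      constructor
      · intro h
        have h4 := congrArg (fun w => (cs.simple i' * cs.simple i) ^ k * w
          * ((cs.simple i' * cs.simple i) ^ k)⁻¹) h
        have h5 : (cs.simple i' * cs.simple i) ^ k * (((cs.simple i' * cs.simple i) ^ k)⁻¹ * t
            * (cs.simple i' * cs.simple i) ^ k) * ((cs.simple i' * cs.simple i) ^ k)⁻¹ = t := by
          group
        rw [h5] at h4
        rw [h4]
        exact invol_conj2 ha hb k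
      · intro h
        rw [h, ← invol_conj2 ha hb k]
        group
    rw [Prod.mk.injEq]
    constructor
    · rw [pow_succ' (cs.simple i * cs.simple i') k, mul_inv_rev (cs.simple i * cs.simple i'),
        mul_inv_rev (cs.simple i) (cs.simple i'), cs.inv_simple, cs.inv_simple]
      simp only [mul_assoc]
    · simp only [hc1, hc2]
      have h2 : 2 * (k + 1) = (2 * k + 1) + 1 := by omega
      rw [h2, Finset.prod_range_succ, Finset.prod_range_succ]
      generalize (∏ j ∈ Finset.range (2 * k),
        (if t = (cs.simple i' * cs.simple i) ^ j * cs.simple i' then (-1 : ℤˣ) else 1)) = P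
      generalize (if t = (cs.simple i' * cs.simple i) ^ (2 * k) * cs.simple i'
        then (-1 : ℤˣ) else 1) = Q
      generalize (if t = (cs.simple i' * cs.simple i) ^ (2 * k + 1) * cs.simple i'
        then (-1 : ℤˣ) else 1) = R
      simp [mul_comm, mul_left_comm, mul_assoc]

lemma titsPerm_liftable : cm.IsLiftable (fun i => titsPerm cs i) := by
  intro i i'
  apply Equiv.ext
  rintro ⟨t, ε⟩
  show ((titsPerm cs i * titsPerm cs i') ^ cm i i') (t, ε) = (1 : Equiv.Perm (W × ℤˣ)) (t, ε)
  rw [titsPerm_mul_pow]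
  have hz : (cs.simple i * cs.simple i') ^ cm i i' = 1 := cs.simple_mul_simple_pow i i'
  have hy : (cs.simple i' * cs.simple i) ^ cm i i' = 1 := cs.simple_mul_simple_pow' i i'
  have hprod : (∏ j ∈ Finset.range (2 * cm i i'),
      (if t = (cs.simple i' * cs.simple i) ^ j * cs.simple i' then (-1 : ℤˣ) else 1)) = 1 := by
    have h2 : 2 * cm i i' = cm i i' + cm i i' := by omega
    rw [h2, Finset.prod_range_add]
    have heq : ∀ j, (if t = (cs.simple i' * cs.simple i) ^ (cm i i' + j) * cs.simple i'
        then (-1 : ℤˣ) else 1) = (if t = (cs.simple i' * cs.simple i) ^ j * cs.simple i'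
        then (-1 : ℤˣ) else 1) := by
      intro j
      rw [pow_add, hy, one_mul]
    rw [Finset.prod_congr rfl (fun j _ => heq j)]
    exact Int.units_mul_self _
  rw [hz, hprod]
  simp

/-- The Tits homomorphism. -/
noncomputable def titsRho : W →* Equiv.Perm (W × ℤˣ) :=
  cs.lift ⟨fun i => titsPerm cs i, titsPerm_liftable cs⟩

lemma titsRho_simple (i : ι) : titsRho cs (cs.simple i) = titsPerm cs i :=
  cs.lift_apply_simple (titsPerm_liftable cs) i

/-- Sign sequence along a word. -/
noncomputable def signSeq (ω : List ι) (t : W) : ℤˣ :=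
  ((cs.rightInvSeq ω).map (fun r => if t = r then (-1 : ℤˣ) else 1)).prod

lemma signSeq_eq_one {ω : List ι} {t : W} (h : t ∉ cs.rightInvSeq ω) :
    signSeq cs ω t = 1 := by
  apply List.prod_eq_one
  intro x hx
  obtain ⟨r, hr, rfl⟩ := List.mem_map.mp hx
  rw [if_neg]
  intro he
  exact h (he ▸ hr)

lemma mem_of_signSeq_ne_one {ω : List ι} {t : W} (h : signSeq cs ω t ≠ 1) :
    t ∈ cs.rightInvSeq ω := by
  by_contra hmem
  exact h (signSeq_eq_one cs hmem)

lemma titsRho_wordProd (ω : List ι) (t : W) (ε : ℤˣ) :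
    titsRho cs (cs.wordProd ω) (t, ε)
      = (cs.wordProd ω * t * (cs.wordProd ω)⁻¹, signSeq cs ω t * ε) := by
  induction ω generalizing t ε with
  | nil => simp [signSeq]
  | cons i ω ih =>
    rw [cs.wordProd_cons, map_mul, Equiv.Perm.mul_apply, ih, titsRho_simple, titsPerm_apply]
    have hcond : (cs.wordProd ω * t * (cs.wordProd ω)⁻¹ = cs.simple i)
        ↔ (t = (cs.wordProd ω)⁻¹ * cs.simple i * cs.wordProd ω) := by
      constructor
      · intro h
        have h4 := congrArg (fun w => (cs.wordProd ω)⁻¹ * w * cs.wordProd ω) h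
        have h5 : (cs.wordProd ω)⁻¹ * (cs.wordProd ω * t * (cs.wordProd ω)⁻¹)
            * cs.wordProd ω = t := by group
        rw [h5] at h4
        exact h4
      · intro h
        rw [h]
        group
    have hsign : signSeq cs (i :: ω) t
        = (if t = (cs.wordProd ω)⁻¹ * cs.simple i * cs.wordProd ω then (-1 : ℤˣ) else 1)
            * signSeq cs ω t := by
      unfold signSeq
      rw [show cs.rightInvSeq (i :: ω)
          = ((cs.wordProd ω)⁻¹ * cs.simple i * cs.wordProd ω) :: cs.rightInvSeq ω from rfl]
      rw [List.map_cons, List.prod_cons]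
    rw [Prod.mk.injEq]
    constructor
    · rw [mul_inv_rev (cs.simple i) (cs.wordProd ω), cs.inv_simple]
      simp only [mul_assoc]
    · rw [hsign]
      simp only [hcond]
      simp only [mul_assoc]

/-- The sign cocycle. -/
noncomputable def eta (w t : W) : ℤˣ := (titsRho cs w (t, 1)).2

lemma titsRho_apply (w t : W) (ε : ℤˣ) :
    titsRho cs w (t, ε) = (w * t * w⁻¹, eta cs w t * ε) := by
  obtain ⟨ω, rfl⟩ := cs.wordProd_surjective w
  rw [titsRho_wordProd]
  unfold eta
  rw [titsRho_wordProd, mul_one]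

lemma eta_eq_signSeq (ω : List ι) (t : W) : eta cs (cs.wordProd ω) t = signSeq cs ω t := by
  unfold eta
  rw [titsRho_wordProd, mul_one]

lemma eta_mul (u v t : W) : eta cs (u * v) t = eta cs v t * eta cs u (v * t * v⁻¹) := by
  have h2 := titsRho_apply cs (u * v) t 1
  have h3 : titsRho cs (u * v) (t, 1) = titsRho cs u (titsRho cs v (t, 1)) := by
    rw [map_mul, Equiv.Perm.mul_apply]
  rw [titsRho_apply cs v t 1, titsRho_apply cs u (v * t * v⁻¹) (eta cs v t * 1)] at h3
  have h4 := congrArg Prod.snd (h2.symm.trans h3)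
  have h5 : eta cs (u * v) t = eta cs u (v * t * v⁻¹) * eta cs v t := by simpa using h4
  rw [h5]
  exact mul_comm _ _

lemma eta_simple (i : ι) (t : W) :
    eta cs (cs.simple i) t = if t = cs.simple i then -1 else 1 := by
  unfold eta
  rw [titsRho_simple, titsPerm_apply, mul_one]

lemma eta_one (t : W) : eta cs 1 t = 1 := by
  unfold eta
  rw [map_one]
  rfl

lemma eta_self {t : W} (ht : cs.IsReflection t) : eta cs t t = -1 := by
  obtain ⟨p, i, rfl⟩ := ht
  have e1 : p * cs.simple i * p⁻¹ = p * (cs.simple i * p⁻¹) := by rw [mul_assoc]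
  have e2 : (cs.simple i * p⁻¹) * (p * cs.simple i * p⁻¹) * (cs.simple i * p⁻¹)⁻¹
      = cs.simple i := by group
  have e3 : p⁻¹ * (p * cs.simple i * p⁻¹) * (p⁻¹)⁻¹ = cs.simple i := by group
  have step1 : eta cs (p * cs.simple i * p⁻¹) (p * cs.simple i * p⁻¹)
      = eta cs (cs.simple i * p⁻¹) (p * cs.simple i * p⁻¹) * eta cs p (cs.simple i) := by
    nth_rewrite 1 [e1]
    rw [eta_mul, e2]
  have step2 : eta cs (cs.simple i * p⁻¹) (p * cs.simple i * p⁻¹)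
      = eta cs p⁻¹ (p * cs.simple i * p⁻¹) * (-1) := by
    rw [eta_mul, e3, eta_simple, if_pos rfl]
  have step3 : eta cs p (cs.simple i) * eta cs p⁻¹ (p * cs.simple i * p⁻¹) = 1 := by
    have h := eta_mul cs p⁻¹ p (cs.simple i)
    rw [inv_mul_cancel, eta_one] at h
    exact h.symm
  rw [step1, step2]
  calc eta cs p⁻¹ (p * cs.simple i * p⁻¹) * (-1) * eta cs p (cs.simple i)
      = -(eta cs p (cs.simple i) * eta cs p⁻¹ (p * cs.simple i * p⁻¹)) := by
        rw [mul_comm _ (-1 : ℤˣ), mul_assoc, neg_mul, one_mul,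
          mul_comm (eta cs p⁻¹ (p * cs.simple i * p⁻¹)) (eta cs p (cs.simple i))]
    _ = -1 := by rw [step3]

/-- Strong exchange, right-handed membership form. -/
lemma mem_rightInvSeq_of_isRightInversion {ω : List ι} (hω : cs.IsReduced ω) {t : W}
    (ht : cs.IsReflection t)
    (hlt : cs.length (cs.wordProd ω * t) < cs.length (cs.wordProd ω)) :
    t ∈ cs.rightInvSeq ω := by
  by_contra hmem
  have h1 : eta cs (cs.wordProd ω) t = 1 := by
    rw [eta_eq_signSeq]
    exact signSeq_eq_one cs hmem
  have h2 : eta cs (cs.wordProd ω * t) t = -1 := by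
    rw [eta_mul]
    have htt : t * t * t⁻¹ = t := by rw [ht.mul_self, one_mul, ht.inv]
    rw [htt, eta_self cs ht, h1, mul_one]
  obtain ⟨τ, hτred, hτ⟩ := cs.exists_reduced_word' (cs.wordProd ω * t)
  rw [hτ, eta_eq_signSeq] at h2
  have h4 : t ∈ cs.rightInvSeq τ := by
    apply mem_of_signSeq_ne_one cs
    rw [h2]
    decide
  obtain ⟨j, hj, hjt⟩ := List.mem_iff_getElem.mp h4
  have hjlen : j < τ.length := by
    rw [cs.length_rightInvSeq] at hj
    exact hj
  have h5 : cs.wordProd τ * t = cs.wordProd (τ.eraseIdx j) := by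
    rw [← cs.wordProd_mul_getD_rightInvSeq τ j]
    congr 1
    rw [List.getD_eq_getElem _ 1 hj]
    exact hjt.symm
  have h6 : cs.wordProd τ * t = cs.wordProd ω := by
    rw [← hτ, mul_assoc, ht.mul_self, mul_one]
  have h7 : cs.length (cs.wordProd ω) < cs.length (cs.wordProd τ) := by
    rw [← h6, h5]
    calc cs.length (cs.wordProd (τ.eraseIdx j)) ≤ (τ.eraseIdx j).length :=
          cs.length_wordProd_le _
      _ < τ.length := by
          rw [← List.length_eraseIdx_add_one hjlen]
          omega
      _ = cs.length (cs.wordProd τ) := hτred.symm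
  rw [← hτ] at h7
  omega

/-- Strong exchange, left-handed membership form. -/
lemma mem_leftInvSeq_of_isLeftInversion {ω : List ι} (hω : cs.IsReduced ω) {t : W}
    (ht : cs.IsReflection t)
    (hlt : cs.length (t * cs.wordProd ω) < cs.length (cs.wordProd ω)) :
    t ∈ cs.leftInvSeq ω := by
  have hrev : cs.IsReduced ω.reverse := (cs.isReduced_reverse_iff ω).mpr hω
  have h1 : cs.length (cs.wordProd ω.reverse * t) < cs.length (cs.wordProd ω.reverse) := by
    rw [cs.wordProd_reverse]
    have e : (cs.wordProd ω)⁻¹ * t = (t * cs.wordProd ω)⁻¹ := by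
      rw [mul_inv_rev, ht.inv]
    rw [e, cs.length_inv, cs.length_inv]
    exact hlt
  have h2 := mem_rightInvSeq_of_isRightInversion cs hrev ht h1
  rw [cs.rightInvSeq_reverse, List.mem_reverse] at h2
  exact h2

end Tits

section Main

variable (cs : CoxeterSystem cm W)

lemma wle_trans {a b c : W} (h1 : WLe cs a b) (h2 : WLe cs b c) : WLe cs a c := by
  unfold WLe at *
  have e1 : a⁻¹ * c = (a⁻¹ * b) * (b⁻¹ * c) := by group
  have i1 : cs.length (a⁻¹ * c) ≤ cs.length (a⁻¹ * b) + cs.length (b⁻¹ * c) := by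
    rw [e1]
    exact cs.length_mul_le _ _
  have e2 : c = a * (a⁻¹ * c) := by group
  have i2 : cs.length c ≤ cs.length a + cs.length (a⁻¹ * c) := by
    nth_rewrite 1 [e2]
    exact cs.length_mul_le _ _
  omega

lemma wle_antisymm {a b : W} (h1 : WLe cs a b) (h2 : WLe cs b a) : a = b := by
  unfold WLe at *
  have e : b⁻¹ * a = (a⁻¹ * b)⁻¹ := by group
  rw [e, cs.length_inv] at h2
  have h3 : cs.length (a⁻¹ * b) = 0 := by omega
  exact inv_mul_eq_one.mp (cs.length_eq_zero_iff.mp h3)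

lemma sep_step_up (c : W) (i : ι) {r' : W} (hr' : cs.IsReflection r')
    (hup : cs.length (c * cs.simple i) = cs.length c + 1)
    (hsep : SepElem cs r' c (c * cs.simple i)) :
    r' = c * cs.simple i * c⁻¹ := by
  rcases hsep with ⟨h1, h2⟩ | ⟨h2, h1⟩
  · exfalso
    apply h2
    calc cs.length (r' * (c * cs.simple i)) = cs.length ((r' * c) * cs.simple i) := by
          rw [mul_assoc]
      _ ≤ cs.length (r' * c) + cs.length (cs.simple i) := cs.length_mul_le _ _
      _ = cs.length (r' * c) + 1 := by rw [cs.length_simple]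
      _ < cs.length c + 1 := by omega
      _ = cs.length (c * cs.simple i) := hup.symm
  · obtain ⟨ω, hωred, hωeq⟩ := cs.exists_reduced_word' c
    have hconcred : cs.IsReduced (ω.concat i) := by
      unfold CoxeterSystem.IsReduced
      rw [cs.wordProd_concat, ← hωeq, List.length_concat, hup, hωeq, hωred]
    have hlt : cs.length (r' * cs.wordProd (ω.concat i)) < cs.length (cs.wordProd (ω.concat i)) := by
      rw [cs.wordProd_concat, ← hωeq]
      exact h2
    have hmem := mem_leftInvSeq_of_isLeftInversion cs hconcred hr' hlt
    rw [cs.leftInvSeq_concat, List.concat_eq_append, List.mem_append] at hmem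
    rcases hmem with hmem | hmem
    · exfalso
      apply h1
      have h3 := cs.isLeftInversion_of_mem_leftInvSeq hωred hmem
      rw [← hωeq] at h3
      exact h3.2
    · rw [List.mem_singleton] at hmem
      rw [hmem, hωeq]

lemma sep_step (c : W) (i : ι) {r' : W} (hr' : cs.IsReflection r')
    (hsep : SepElem cs r' c (c * cs.simple i)) :
    r' = c * cs.simple i * c⁻¹ := by
  rcases cs.length_mul_simple c i with hup | hdown
  · exact sep_step_up cs c i hr' hup hsep
  · have hne := cs.length_mul_simple_ne c i
    have hcc : c * cs.simple i * cs.simple i = c := cs.simple_mul_simple_cancel_right i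
    have hswap : SepElem cs r' (c * cs.simple i) ((c * cs.simple i) * cs.simple i) := by
      unfold SepElem
      rw [hcc]
      rcases hsep with h | h
      · exact Or.inr h
      · exact Or.inl h
    have hup' : cs.length ((c * cs.simple i) * cs.simple i) = cs.length (c * cs.simple i) + 1 := by
      rw [hcc]
      omega
    have h3 := sep_step_up cs (c * cs.simple i) i hr' hup' hswap
    rw [hcc] at h3
    rw [h3, mul_inv_rev, cs.inv_simple, ← mul_assoc]

lemma sep_chain {r' : W} : ∀ (ρ : List ι) (c : W), SepElem cs r' c (c * cs.wordProd ρ) →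
    ∃ j : ℕ, ∃ hj : j < ρ.length,
      SepElem cs r' (c * cs.wordProd (ρ.take j))
        (c * cs.wordProd (ρ.take j) * cs.simple (ρ.get ⟨j, hj⟩)) := by
  intro ρ
  induction ρ with
  | nil =>
    intro c hsep
    exfalso
    rw [cs.wordProd_nil, mul_one] at hsep
    rcases hsep with ⟨h1, h2⟩ | ⟨h1, h2⟩ <;> exact h2 h1
  | cons i ρ ih =>
    intro c hsep
    by_cases hd : SepElem cs r' c (c * cs.simple i)
    · refine ⟨0, Nat.succ_pos _, ?_⟩
      simp only [List.take_zero, cs.wordProd_nil, mul_one]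
      exact hd
    · have heq : c * cs.wordProd (i :: ρ) = (c * cs.simple i) * cs.wordProd ρ := by
        rw [cs.wordProd_cons, mul_assoc]
      rw [heq] at hsep
      have hsep' : SepElem cs r' (c * cs.simple i) ((c * cs.simple i) * cs.wordProd ρ) := by
        simp only [SepElem, Xor', Xor] at hsep hd ⊢
        tauto
      obtain ⟨j, hj, hs⟩ := ih (c * cs.simple i) hsep'
      refine ⟨j + 1, Nat.succ_lt_succ hj, ?_⟩
      have ht : cs.wordProd ((i :: ρ).take (j + 1)) = cs.simple i * cs.wordProd (ρ.take j) := by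
        rw [List.take_succ_cons, cs.wordProd_cons]
      rw [ht, ← mul_assoc]
      exact hs

end Main

end GarsideAux

/-- If `B` is a finite Garside shadow with `M = max{ℓ(b) : b ∈ B}`,
`ℓ(sg) > ℓ(g)` and `π_B(g⁻¹) ≠ π_B((sg)⁻¹)`, then the wall of `s` is `M`-close to `sg`. -/
theorem wall_close_of_proj_ne [Finite ι] (cs : CoxeterSystem cm W)
    (B : Set W) (hB : IsGarsideShadow cs B) (hBfin : B.Finite)
    (piB : W → W) (hpi : IsGarsideProjection cs B piB)
    (M : ℕ) (hM : IsGreatest (cs.length '' B) M)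
    (g : W) (s : ι) (hlen : cs.length g < cs.length (cs.simple s * g))
    (hne : piB g⁻¹ ≠ piB (cs.simple s * g)⁻¹) :
    MClose cs M (cs.simple s * g) (cs.simple s) := by
  classical
  open GarsideAux in
  obtain ⟨hbB, hjoin⟩ := hpi (cs.simple s * g)⁻¹
  set b := piB (cs.simple s * g)⁻¹ with hbdef
  have hsg1 : cs.length (cs.simple s * g) = cs.length g + 1 := by
    rcases cs.length_simple_mul g s with h | h <;> omega
  have hxinv : cs.length (cs.simple s * g)⁻¹ = cs.length g + 1 := by
    rw [cs.length_inv]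
    exact hsg1
  have hginv : cs.length g⁻¹ = cs.length g := cs.length_inv g
  have hbub : WLe cs b (cs.simple s * g)⁻¹ := hjoin.2 _ (fun c hc => hc.2)
  have hblen : cs.length b ≤ M := hM.2 ⟨b, hbB, rfl⟩
  have hgx : WLe cs g⁻¹ (cs.simple s * g)⁻¹ := by
    unfold WLe
    have e : (g⁻¹)⁻¹ * (cs.simple s * g)⁻¹ = (cs.simple s)⁻¹ := by group
    rw [e, cs.inv_simple, cs.length_simple]
    omega
  have hcontra : ¬ WLe cs b g⁻¹ := by
    intro hbg
    apply hne
    obtain ⟨hb'B, hjoin'⟩ := hpi g⁻¹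
    have h1 : WLe cs (piB g⁻¹) b :=
      hjoin'.2 b (fun c hc => hjoin.1 c ⟨hc.1, wle_trans cs hc.2 hgx⟩)
    have h2 : WLe cs b (piB g⁻¹) := hjoin'.1 b ⟨hbB, hbg⟩
    exact wle_antisymm cs h1 h2
  have htrefl : cs.IsReflection (g⁻¹ * cs.simple s * g) := ⟨g⁻¹, s, by rw [inv_inv]⟩
  obtain ⟨ωb, hωbred, hωbeq⟩ := cs.exists_reduced_word' b
  obtain ⟨ωc, hωcred, hωceq⟩ := cs.exists_reduced_word' (b⁻¹ * (cs.simple s * g)⁻¹)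
  have hπω : cs.wordProd (ωb ++ ωc) = (cs.simple s * g)⁻¹ := by
    rw [cs.wordProd_append, ← hωbeq, ← hωceq]
    group
  have hlensum : cs.length b + cs.length (b⁻¹ * (cs.simple s * g)⁻¹)
      = cs.length (cs.simple s * g)⁻¹ := hbub
  have hb_len : cs.length b = ωb.length := by rw [hωbeq]; exact hωbred
  have hc_len : cs.length (b⁻¹ * (cs.simple s * g)⁻¹) = ωc.length := by
    rw [hωceq]; exact hωcred
  have hred : cs.IsReduced (ωb ++ ωc) := by
    unfold CoxeterSystem.IsReduced
    rw [hπω, List.length_append, ← hlensum, hb_len, hc_len]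
  have hmemt : (g⁻¹ * cs.simple s * g) ∈ cs.leftInvSeq (ωb ++ ωc) := by
    apply mem_leftInvSeq_of_isLeftInversion cs hred htrefl
    rw [hπω]
    have e : (g⁻¹ * cs.simple s * g) * (cs.simple s * g)⁻¹ = g⁻¹ := by group
    rw [e, hginv, hxinv]
    omega
  obtain ⟨j, hjlt, hjel⟩ := List.mem_iff_getElem.mp hmemt
  have hjlen : j < (ωb ++ ωc).length := by
    rw [cs.length_leftInvSeq] at hjlt
    exact hjlt
  have hgetD : (cs.leftInvSeq (ωb ++ ωc)).getD j 1 = g⁻¹ * cs.simple s * g := by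
    rw [List.getD_eq_getElem _ 1 hjlt]
    exact hjel
  by_cases hcase : j < ωb.length
  · -- the reflection comes from the `b` part: extract the conjugating element `p`
    have htake : (ωb ++ ωc).take j = ωb.take j :=
      List.take_append_of_le_length (le_of_lt hcase)
    have hget2 : (ωb ++ ωc)[j]? = some ((ωb ++ ωc).get ⟨j, hjlen⟩) := List.getElem?_eq_getElem hjlen
    rw [cs.getD_leftInvSeq, hget2] at hgetD
    simp only [Option.map_some, Option.getD_some] at hgetD
    -- hgetD : π(take j) * s i * (π take j)⁻¹ = g⁻¹ s g
    have hplen : cs.length (cs.wordProd ((ωb ++ ωc).take j)) < M := by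
      have h1 := cs.length_wordProd_le ((ωb ++ ωc).take j)
      have h2 : ((ωb ++ ωc).take j).length = j := by
        rw [List.length_take]
        omega
      omega
    obtain ⟨ρ, hρred, hρeq⟩ := cs.exists_reduced_word' (cs.wordProd ((ωb ++ ωc).take j))
    refine ⟨((cs.leftInvSeq ρ).map
      (fun r => (cs.simple s * g) * r * (cs.simple s * g)⁻¹)).toFinset, ?_, ?_⟩
    · calc _ ≤ ((cs.leftInvSeq ρ).map
            (fun r => (cs.simple s * g) * r * (cs.simple s * g)⁻¹)).length :=
            List.toFinset_card_le _
        _ = ρ.length := by rw [List.length_map, cs.length_leftInvSeq]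
        _ = cs.length (cs.wordProd ((ωb ++ ωc).take j)) := by rw [hρeq]; exact hρred.symm
        _ ≤ M := le_of_lt hplen
    · intro r' hrrefl hsw
      have hwall : cs.simple s * ((cs.simple s * g) * cs.wordProd ((ωb ++ ωc).take j))
          = ((cs.simple s * g) * cs.wordProd ((ωb ++ ωc).take j))
            * cs.simple ((ωb ++ ωc).get ⟨j, hjlen⟩) := by
        have e : cs.simple s * ((cs.simple s * g) * cs.wordProd ((ωb ++ ωc).take j))
            = (cs.simple s * g) * ((g⁻¹ * cs.simple s * g)
              * cs.wordProd ((ωb ++ ωc).take j)) := by group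
        rw [e, ← hgetD]
        group
      have hsep := hsw ((cs.simple s * g) * cs.wordProd ((ωb ++ ωc).take j))
        ⟨(ωb ++ ωc).get ⟨j, hjlen⟩, hwall⟩
      rw [hρeq] at hsep
      obtain ⟨k, hk, hsepk⟩ := sep_chain cs ρ (cs.simple s * g) hsep
      have hr'eq := sep_step cs _ _ hrrefl hsepk
      have hk' : k < (cs.leftInvSeq ρ).length := by
        rw [cs.length_leftInvSeq]
        exact hk
      have hgd : (cs.leftInvSeq ρ).getD k 1
          = cs.wordProd (ρ.take k) * cs.simple (ρ.get ⟨k, hk⟩)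
            * (cs.wordProd (ρ.take k))⁻¹ := by
        rw [cs.getD_leftInvSeq, List.getElem?_eq_getElem hk]
        simp only [Option.map_some, Option.getD_some, List.get_eq_getElem]
      rw [List.mem_toFinset]
      apply List.mem_map.mpr
      refine ⟨(cs.leftInvSeq ρ).getD k 1, ?_, ?_⟩
      · rw [List.getD_eq_getElem _ 1 hk']
        exact List.getElem_mem _
      · rw [hgd, hr'eq]
        group
  · -- the reflection comes from the `c` part: contradiction with `hcontra`
    exfalso
    apply hcontra
    push_neg at hcase
    have herase : cs.wordProd ((ωb ++ ωc).eraseIdx j)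
        = b * cs.wordProd (ωc.eraseIdx (j - ωb.length)) := by
      rw [List.eraseIdx_append_of_length_le hcase, cs.wordProd_append, hωbeq]
    have hg_eq : g⁻¹ = cs.wordProd ((ωb ++ ωc).eraseIdx j) := by
      rw [← cs.getD_leftInvSeq_mul_wordProd (ωb ++ ωc) j, hgetD, hπω]
      group
    unfold WLe
    have e1 : b⁻¹ * g⁻¹ = cs.wordProd (ωc.eraseIdx (j - ωb.length)) := by
      rw [hg_eq, herase]
      group
    have hlt : j - ωb.length < ωc.length := by
      rw [List.length_append] at hjlen
      omega
    have i1 : cs.length (b⁻¹ * g⁻¹) + 1 ≤ ωc.length := by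
      rw [e1]
      have h1 := cs.length_wordProd_le (ωc.eraseIdx (j - ωb.length))
      have h2 := List.length_eraseIdx_add_one hlt
      omega
    have i2 : cs.length g⁻¹ ≤ cs.length b + cs.length (b⁻¹ * g⁻¹) := by
      have e2 : g⁻¹ = b * (b⁻¹ * g⁻¹) := by group
      nth_rewrite 1 [e2]
      exact cs.length_mul_le _ _
    omega
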